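/- arXiv:2109.04228 — 3 statements merged into one kernel-verified Lean document; each statement's English description precedes it below -/
import Mathlib

section
/- For p ≥ 2 and x, y ∈ ℝⁿ with ‖x − y‖₂ ≥ ε > 0 and x ≠ 0, letting z(x) = −‖x‖_p with subgradient ∂z(x) = −‖x‖_p^{1−p}·sign(x)⊙|x|^{p−1}, it holds that z(x) − z(y) − ⟨x − y, ∂z(x)⟩ ≤ (ρ/2)‖x − y‖₂² with ρ = 4/ε. -/
open Finset

/-- ℓp norm is at most ℓ2 norm for p ≥ 2. -/
lemma lp_le_l2_aux {n : ℕ} {p : ℝ} (hp : 2 ≤ p) (u : Fin n → ℝ) :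
    (∑ i : Fin n, |u i| ^ p) ^ (1 / p) ≤ Real.sqrt (∑ i : Fin n, u i ^ 2) := by
  set d := Real.sqrt (∑ i : Fin n, u i ^ 2) with hd
  have hd0 : 0 ≤ d := Real.sqrt_nonneg _
  have hp0 : (0 : ℝ) < p := by linarith
  have hsum : (0 : ℝ) ≤ ∑ i : Fin n, u i ^ 2 :=
    Finset.sum_nonneg fun i _ => sq_nonneg _
  have hd2 : d ^ 2 = ∑ i : Fin n, u i ^ 2 := Real.sq_sqrt hsum
  have hui : ∀ i, |u i| ≤ d := by
    intro i
    have h1 : u i ^ 2 ≤ ∑ j : Fin n, u j ^ 2 :=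
      Finset.single_le_sum (fun j _ => sq_nonneg (u j)) (Finset.mem_univ i)
    have := Real.sqrt_le_sqrt h1
    rwa [Real.sqrt_sq_eq_abs] at this
  have key : ∑ i : Fin n, |u i| ^ p ≤ d ^ p := by
    have hterm : ∀ i, |u i| ^ p ≤ u i ^ 2 * d ^ (p - 2) := by
      intro i
      have h1 : |u i| ^ p = |u i| ^ (2 : ℝ) * |u i| ^ (p - 2) := by
        rw [← Real.rpow_add' (abs_nonneg _) (by norm_num; linarith)]
        norm_num
      rw [h1]
      have h2 : |u i| ^ (2 : ℝ) = u i ^ 2 := by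
        rw [show (2 : ℝ) = ((2 : ℕ) : ℝ) by norm_num, Real.rpow_natCast, sq_abs]
      rw [h2]
      exact mul_le_mul_of_nonneg_left
        (Real.rpow_le_rpow (abs_nonneg _) (hui i) (by linarith)) (sq_nonneg _)
    calc ∑ i : Fin n, |u i| ^ p ≤ ∑ i : Fin n, u i ^ 2 * d ^ (p - 2) :=
          Finset.sum_le_sum fun i _ => hterm i
      _ = (∑ i : Fin n, u i ^ 2) * d ^ (p - 2) := by rw [← Finset.sum_mul]
      _ = d ^ (2 : ℝ) * d ^ (p - 2) := by
          rw [← hd2, show (2 : ℝ) = ((2 : ℕ) : ℝ) by norm_num, Real.rpow_natCast]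
      _ = d ^ p := by
          rw [← Real.rpow_add' hd0 (by norm_num; linarith)]
          norm_num
  have h3 : (∑ i : Fin n, |u i| ^ p) ^ (1 / p) ≤ (d ^ p) ^ (1 / p) :=
    Real.rpow_le_rpow (Finset.sum_nonneg fun i _ => Real.rpow_nonneg (abs_nonneg _) _)
      key (by positivity)
  calc (∑ i : Fin n, |u i| ^ p) ^ (1 / p) ≤ (d ^ p) ^ (1 / p) := h3
    _ = d := by
        rw [← Real.rpow_mul hd0, mul_one_div, div_self (ne_of_gt hp0), Real.rpow_one]

/-- local bounded nonconvexity of z(x) = -‖x‖_p for p ≥ 2,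
with ρ = 4/ε whenever ‖x - y‖₂ ≥ ε. -/
theorem stmt_4 (n : ℕ) (p ε : ℝ) (hp : 2 ≤ p) (hε : 0 < ε)
    (x y : Fin n → ℝ) (hx : x ≠ 0)
    (hfar : ε ≤ Real.sqrt (∑ i : Fin n, (x i - y i) ^ 2)) :
    letI lpnorm : (Fin n → ℝ) → ℝ := fun u => (∑ i : Fin n, |u i| ^ p) ^ (1 / p)
    letI z : (Fin n → ℝ) → ℝ := fun u => -lpnorm u
    letI v : Fin n → ℝ := fun i =>
      -((lpnorm x) ^ (1 - p) * (Real.sign (x i) * |x i| ^ (p - 1)))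
    z x - z y - (∑ i : Fin n, (x i - y i) * v i) ≤
      (4 / ε) / 2 * ∑ i : Fin n, (x i - y i) ^ 2 := by
  beta_reduce
  have hp0 : (0 : ℝ) < p := by linarith
  set L : ℝ := (∑ i : Fin n, |x i| ^ p) ^ (1 / p) with hL
  set M : ℝ := (∑ i : Fin n, |y i| ^ p) ^ (1 / p) with hM
  set S : ℝ := ∑ i : Fin n, (x i - y i) ^ 2 with hS
  have hSnn : 0 ≤ S := Finset.sum_nonneg fun i _ => sq_nonneg _
  set d : ℝ := Real.sqrt S with hdd
  have hd0 : 0 < d := lt_of_lt_of_le hε hfar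
  have hd2 : d ^ 2 = S := Real.sq_sqrt hSnn
  -- L > 0 since x ≠ 0
  have hLpos : 0 < L := by
    have : ∃ i, x i ≠ 0 := by
      by_contra h
      push_neg at h
      exact hx (funext fun i => h i)
    obtain ⟨i, hi⟩ := this
    have h1 : (0 : ℝ) < |x i| ^ p := Real.rpow_pos_of_pos (abs_pos.mpr hi) _
    have h2 : (0 : ℝ) < ∑ j : Fin n, |x j| ^ p :=
      lt_of_lt_of_le h1 (Finset.single_le_sum
        (fun j _ => Real.rpow_nonneg (abs_nonneg _) _) (Finset.mem_univ i))
    exact Real.rpow_pos_of_pos h2 _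
  -- each |x i| ≤ L
  have hxiL : ∀ i, |x i| ≤ L := by
    intro i
    have h1 : |x i| ^ p ≤ ∑ j : Fin n, |x j| ^ p :=
      Finset.single_le_sum (fun j _ => Real.rpow_nonneg (abs_nonneg _) _)
        (Finset.mem_univ i)
    have h2 : (|x i| ^ p) ^ (1 / p) ≤ (∑ j : Fin n, |x j| ^ p) ^ (1 / p) :=
      Real.rpow_le_rpow (Real.rpow_nonneg (abs_nonneg _) _) h1 (by positivity)
    rwa [← Real.rpow_mul (abs_nonneg _), mul_one_div, div_self (ne_of_gt hp0),
      Real.rpow_one] at h2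
  -- the positive subgradient direction
  set w : Fin n → ℝ := fun i => L ^ (1 - p) * (Real.sign (x i) * |x i| ^ (p - 1)) with hw
  -- ‖w‖₂² ≤ 1
  have hwnorm : ∑ i : Fin n, w i ^ 2 ≤ 1 := by
    have hterm : ∀ i, (Real.sign (x i) * |x i| ^ (p - 1)) ^ 2
        ≤ |x i| ^ p * L ^ (p - 2) := by
      intro i
      have hsgn : Real.sign (x i) ^ 2 ≤ 1 := by
        rcases Real.sign_apply_eq (x i) with h | h | h <;> rw [h] <;> norm_num
      have h1 : (Real.sign (x i) * |x i| ^ (p - 1)) ^ 2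
          = Real.sign (x i) ^ 2 * (|x i| ^ (p - 1)) ^ 2 := by ring
      have h2 : (|x i| ^ (p - 1)) ^ 2 = |x i| ^ (2 * (p - 1)) := by
        rw [← Real.rpow_natCast (|x i| ^ (p - 1)) 2, ← Real.rpow_mul (abs_nonneg _)]
        norm_num
        ring_nf
      have h3 : |x i| ^ (2 * (p - 1)) ≤ |x i| ^ p * L ^ (p - 2) := by
        have heq : |x i| ^ (2 * (p - 1)) = |x i| ^ p * |x i| ^ (p - 2) := by
          rw [← Real.rpow_add' (abs_nonneg _) (by intro h; nlinarith)]
          ring_nf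
        rw [heq]
        exact mul_le_mul_of_nonneg_left
          (Real.rpow_le_rpow (abs_nonneg _) (hxiL i) (by linarith))
          (Real.rpow_nonneg (abs_nonneg _) _)
      calc (Real.sign (x i) * |x i| ^ (p - 1)) ^ 2
          = Real.sign (x i) ^ 2 * (|x i| ^ (p - 1)) ^ 2 := h1
        _ ≤ 1 * (|x i| ^ (p - 1)) ^ 2 :=
            mul_le_mul_of_nonneg_right hsgn (sq_nonneg _)
        _ = |x i| ^ (2 * (p - 1)) := by rw [one_mul, h2]
        _ ≤ |x i| ^ p * L ^ (p - 2) := h3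
    have hsum : ∑ i : Fin n, (Real.sign (x i) * |x i| ^ (p - 1)) ^ 2
        ≤ L ^ p * L ^ (p - 2) := by
      calc ∑ i : Fin n, (Real.sign (x i) * |x i| ^ (p - 1)) ^ 2
          ≤ ∑ i : Fin n, |x i| ^ p * L ^ (p - 2) :=
            Finset.sum_le_sum fun i _ => hterm i
        _ = (∑ i : Fin n, |x i| ^ p) * L ^ (p - 2) := by rw [← Finset.sum_mul]
        _ = L ^ p * L ^ (p - 2) := by
            congr 1
            have : L = (∑ i : Fin n, |x i| ^ p) ^ (1 / p) := rfl
            rw [this, ← Real.rpow_mul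
              (Finset.sum_nonneg fun i _ => Real.rpow_nonneg (abs_nonneg _) _),
              one_div_mul_cancel (ne_of_gt hp0), Real.rpow_one]
    have hL2 : (L ^ (1 - p)) ^ 2 = L ^ (2 * (1 - p)) := by
      rw [← Real.rpow_natCast (L ^ (1 - p)) 2, ← Real.rpow_mul (le_of_lt hLpos)]
      norm_num
      ring_nf
    calc ∑ i : Fin n, w i ^ 2
        = (L ^ (1 - p)) ^ 2 * ∑ i : Fin n, (Real.sign (x i) * |x i| ^ (p - 1)) ^ 2 := by
          rw [Finset.mul_sum]; exact Finset.sum_congr rfl fun i _ => by rw [hw]; ring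
      _ ≤ (L ^ (1 - p)) ^ 2 * (L ^ p * L ^ (p - 2)) :=
          mul_le_mul_of_nonneg_left hsum (sq_nonneg _)
      _ = L ^ (2 * (1 - p)) * (L ^ p * L ^ (p - 2)) := by rw [hL2]
      _ = 1 := by
          rw [← Real.rpow_add hLpos, ← Real.rpow_add hLpos]
          have : 2 * (1 - p) + (p + (p - 2)) = 0 := by ring
          rw [this, Real.rpow_zero]
  -- Cauchy–Schwarz: ⟨x-y, w⟩ ≤ d
  have hCS : ∑ i : Fin n, (x i - y i) * w i ≤ d := by
    have h1 := Real.sum_mul_le_sqrt_mul_sqrt Finset.univ (fun i => x i - y i) w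
    have h2 : Real.sqrt (∑ i : Fin n, w i ^ 2) ≤ 1 := by
      have := Real.sqrt_le_sqrt hwnorm
      simpa using this
    calc ∑ i : Fin n, (x i - y i) * w i
        ≤ Real.sqrt (∑ i : Fin n, (x i - y i) ^ 2) * Real.sqrt (∑ i : Fin n, w i ^ 2) := h1
      _ ≤ d * 1 := by
          apply mul_le_mul _ h2 (Real.sqrt_nonneg _) (le_of_lt hd0)
          · exact le_of_eq rfl
      _ = d := mul_one d
  -- Minkowski: M - L ≤ d
  have hMink : M - L ≤ d := by
    have h1 : M ≤ L + (∑ i : Fin n, |y i - x i| ^ p) ^ (1 / p) := by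
      have h0 := Real.Lp_add_le (s := Finset.univ) (f := x) (g := fun i => y i - x i)
        (by linarith : (1:ℝ) ≤ p)
      have he : ∀ i : Fin n, x i + (y i - x i) = y i := fun i => by ring
      simp only [he] at h0
      exact h0
    have h2 : (∑ i : Fin n, |y i - x i| ^ p) ^ (1 / p) ≤ d := by
      have h3 := lp_le_l2_aux hp (fun i => y i - x i)
      have h4 : ∑ i : Fin n, (y i - x i) ^ 2 = S := by
        rw [hS]; exact Finset.sum_congr rfl fun i _ => by ring
      rwa [h4] at h3
    linarith
  -- put it together
  have hgoal : -L - -M - (∑ i : Fin n, (x i - y i) *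
        -(L ^ (1 - p) * (Real.sign (x i) * |x i| ^ (p - 1))))
      = M - L + ∑ i : Fin n, (x i - y i) * w i := by
    have : ∑ i : Fin n, (x i - y i) * -(L ^ (1 - p) * (Real.sign (x i) * |x i| ^ (p - 1)))
        = -∑ i : Fin n, (x i - y i) * w i := by
      rw [← Finset.sum_neg_distrib]
      exact Finset.sum_congr rfl fun i _ => by rw [hw]; ring
    rw [this]; ring
  rw [hgoal]
  have h2d : M - L + ∑ i : Fin n, (x i - y i) * w i ≤ 2 * d := by linarith
  have hfinal : 2 * d ≤ (4 / ε) / 2 * S := by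
    have : (4 / ε) / 2 * S = 2 / ε * d ^ 2 := by rw [hd2]; ring
    rw [this]
    rw [div_mul_eq_mul_div, le_div_iff₀ hε]
    nlinarith
  linarith
end

section
/- Let F = f + h − g on ℝⁿ where f is convex differentiable with coordinate-wise Lipschitz gradient constants cᵢ, h is convex separable, and g is convex. Let θ ≥ 0 and suppose ẍ is a coordinate-wise stationary point: for each i, η = 0 minimizes η ↦ f(ẍ) + ⟨∇f(ẍ), ηeᵢ⟩ + ((cᵢ+θ)/2)η² + h(ẍ + ηeᵢ) − g(ẍ + ηeᵢ). Suppose also −g is locally ρ-bounded nonconvex at ẍ: −g(ẍ) ≤ −g(y) − ⟨ẍ − y, v⟩ + (ρ/2)‖ẍ − y‖² for some v ∈ ∂g(ẍ) and all y. Then for all d ∈ ℝⁿ: F(ẍ) − F(ẍ + d) ≤ (1/2)Σᵢ (cᵢ + θ + ρ)dᵢ². -/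
/-- Gradient inequality for convex differentiable functions on ℝⁿ. -/
lemma grad_ineq {n : ℕ} {f : (Fin n → ℝ) → ℝ} (hf_conv : ConvexOn ℝ Set.univ f)
    (hf_diff : Differentiable ℝ f) (x d : Fin n → ℝ) :
    fderiv ℝ f x d ≤ f (x + d) - f x := by
  set φ : ℝ → ℝ := fun t => f (x + t • d) with hφ
  have hconv : ConvexOn ℝ Set.univ φ := by
    have := hf_conv.comp_affineMap
      (AffineMap.mk (fun t : ℝ => x + t • d)
        { toFun := fun t : ℝ => t • d
          map_add' := by intro a b; simp [add_smul]
          map_smul' := by intro a b; simp [smul_smul] }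
        (by intro p v; simp [add_smul]; abel))
    simpa [Set.preimage_univ, φ, Function.comp_def] using this
  have hderiv : HasDerivAt φ (fderiv ℝ f x d) 0 := by
    have h1 : HasDerivAt (fun t : ℝ => x + t • d) d 0 := by
      simpa using ((hasDerivAt_id (0:ℝ)).smul_const d).const_add x
    have h2 : HasFDerivAt f (fderiv ℝ f x) (x + (0:ℝ) • d) := by
      simpa using (hf_diff x).hasFDerivAt
    simpa [φ, Function.comp_def] using h2.comp_hasDerivAt 0 h1
  have := hconv.le_slope_of_hasDerivAt (Set.mem_univ 0) (Set.mem_univ 1) one_pos hderiv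
  have hs : slope φ 0 1 = f (x + d) - f x := by
    simp [slope, φ]
  linarith [this.trans_eq hs]

/-- Lemma 5.7: quadratic growth at a coordinate-wise stationary point. -/
theorem stmt_5 (n : ℕ) (f g : (Fin n → ℝ) → ℝ) (hcomp : Fin n → ℝ → ℝ)
    (c : Fin n → ℝ) (θ ρ : ℝ)
    (hf_conv : ConvexOn ℝ Set.univ f)
    (hf_diff : Differentiable ℝ f)
    (hc : ∀ i, 0 ≤ c i)
    (hlip : ∀ (x : Fin n → ℝ) (η : ℝ) (i : Fin n),
      f (x + Pi.single i η) ≤ f x + fderiv ℝ f x (Pi.single i η) + c i / 2 * η ^ 2)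
    (hh_conv : ∀ i, ConvexOn ℝ Set.univ (hcomp i))
    (hg_conv : ConvexOn ℝ Set.univ g)
    (hθ : 0 ≤ θ)
    (xdd : Fin n → ℝ)  -- the coordinate-wise stationary point ẍ
    (v : Fin n → ℝ)
    (hv_sub : ∀ y : Fin n → ℝ, g xdd + ∑ i : Fin n, v i * (y i - xdd i) ≤ g y)
    (hlocal : ∀ y : Fin n → ℝ,
      -g xdd ≤ -g y - (∑ i : Fin n, (xdd i - y i) * v i) +
        ρ / 2 * ∑ i : Fin n, (xdd i - y i) ^ 2)
    -- coordinate-wise stationarity: η = 0 minimizes M_i(ẍ, ·) for every i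
    (hcws : ∀ (i : Fin n) (η : ℝ),
      f xdd + (∑ j : Fin n, hcomp j (xdd j)) - g xdd ≤
        f xdd + fderiv ℝ f xdd (Pi.single i η) + (c i + θ) / 2 * η ^ 2 +
          (∑ j : Fin n, hcomp j (((xdd + Pi.single i η) : Fin n → ℝ) j)) -
          g (xdd + Pi.single i η)) :
    ∀ d : Fin n → ℝ,
      (f xdd + (∑ j : Fin n, hcomp j (xdd j)) - g xdd) -
        (f (xdd + d) + (∑ j : Fin n, hcomp j ((xdd + d) j)) - g (xdd + d)) ≤
      1 / 2 * ∑ i : Fin n, (c i + θ + ρ) * (d i) ^ 2 := by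
  intro d
  -- per-coordinate inequality
  have key : ∀ i : Fin n,
      0 ≤ fderiv ℝ f xdd (Pi.single i (d i)) + (c i + θ) / 2 * (d i) ^ 2 +
        (hcomp i (xdd i + d i) - hcomp i (xdd i)) - v i * d i := by
    intro i
    have h1 := hcws i (d i)
    -- h term: the sums differ only at coordinate i
    have hsum : (∑ j : Fin n, hcomp j (((xdd + Pi.single i (d i)) : Fin n → ℝ) j))
        - (∑ j : Fin n, hcomp j (xdd j))
        = hcomp i (xdd i + d i) - hcomp i (xdd i) := by
      rw [← Finset.sum_sub_distrib]
      have : (∑ j : Fin n, (hcomp j (((xdd + Pi.single i (d i)) : Fin n → ℝ) j)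
          - hcomp j (xdd j)))
          = hcomp i (((xdd + Pi.single i (d i)) : Fin n → ℝ) i) - hcomp i (xdd i) := by
        apply Fintype.sum_eq_single i
        intro b hb
        simp [Pi.add_apply, Pi.single_eq_of_ne hb]
      rw [this]
      simp [Pi.add_apply]
    -- g term via subgradient
    have hg : g xdd + v i * d i ≤ g (xdd + Pi.single i (d i)) := by
      have hthis := hv_sub (xdd + Pi.single i (d i))
      have hv2 : (∑ j : Fin n, v j * (((xdd + Pi.single i (d i)) : Fin n → ℝ) j - xdd j))
          = v i * d i := by
        have : (∑ j : Fin n, v j * (((xdd + Pi.single i (d i)) : Fin n → ℝ) j - xdd j))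
            = v i * (((xdd + Pi.single i (d i)) : Fin n → ℝ) i - xdd i) := by
          apply Fintype.sum_eq_single i
          intro b hb
          simp [Pi.add_apply, Pi.single_eq_of_ne hb]
        rw [this]
        simp [Pi.add_apply]
      linarith [hv2 ▸ hthis]
    linarith [h1, hsum, hg]
  -- sum over i
  have hsumkey : 0 ≤ (∑ i : Fin n, fderiv ℝ f xdd (Pi.single i (d i)))
      + (∑ i : Fin n, (c i + θ) / 2 * (d i) ^ 2)
      + ((∑ i : Fin n, hcomp i (xdd i + d i)) - (∑ i : Fin n, hcomp i (xdd i)))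
      - (∑ i : Fin n, v i * d i) := by
    have h0 : (0:ℝ) ≤ ∑ i : Fin n,
        (fderiv ℝ f xdd (Pi.single i (d i)) + (c i + θ) / 2 * (d i) ^ 2 +
          (hcomp i (xdd i + d i) - hcomp i (xdd i)) - v i * d i) :=
      Finset.sum_nonneg (fun i _ => key i)
    calc (0:ℝ) ≤ _ := h0
      _ = _ := by
        rw [Finset.sum_sub_distrib, Finset.sum_add_distrib, Finset.sum_add_distrib,
          Finset.sum_sub_distrib]
  -- linearity of fderiv
  have hlin : (∑ i : Fin n, fderiv ℝ f xdd (Pi.single i (d i))) = fderiv ℝ f xdd d := by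
    rw [← map_sum]
    congr 1
    exact Finset.univ_sum_single d
  -- gradient inequality
  have hgrad : fderiv ℝ f xdd d ≤ f (xdd + d) - f xdd :=
    grad_ineq hf_conv hf_diff xdd d
  -- local ρ-boundedness at y = xdd + d
  have hloc := hlocal (xdd + d)
  have hloc1 : (∑ i : Fin n, (xdd i - (xdd + d) i) * v i) = -∑ i : Fin n, v i * d i := by
    rw [← Finset.sum_neg_distrib]
    apply Finset.sum_congr rfl
    intro i _
    simp only [Pi.add_apply]; ring
  have hloc2 : (∑ i : Fin n, (xdd i - (xdd + d) i) ^ 2) = ∑ i : Fin n, (d i) ^ 2 := by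
    apply Finset.sum_congr rfl
    intro i _
    simp only [Pi.add_apply]; ring
  rw [hloc1, hloc2] at hloc
  -- rewrite h-sums in the goal
  have hgoalh : (∑ j : Fin n, hcomp j ((xdd + d) j)) = ∑ i : Fin n, hcomp i (xdd i + d i) := by
    apply Finset.sum_congr rfl; intro i _; simp
  -- combine
  have hquad : (∑ i : Fin n, (c i + θ) / 2 * (d i) ^ 2) + ρ / 2 * (∑ i : Fin n, (d i) ^ 2)
      = 1 / 2 * ∑ i : Fin n, (c i + θ + ρ) * (d i) ^ 2 := by
    rw [Finset.mul_sum, Finset.mul_sum, ← Finset.sum_add_distrib]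
    apply Finset.sum_congr rfl
    intro i _; ring
  rw [hgoalh]
  rw [hlin] at hsumkey
  linarith [hsumkey, hgrad, hloc, hquad]
end

section
/- With C symmetric PSD having largest eigenvalue λ₁ > 0 and unit eigenvector u₁, and α > 0, the points x̄ = ±(√λ₁/α)u₁ are global minimizers of F(x) = (α/2)‖x‖² − √(xᵀCx), with optimal value F(x̄) = −λ₁/(2α). -/
open Matrix

/-- Theorem D.3(b): x̄ = ±(√λ₁/α)u₁ are global minimizers of
F(x) = (α/2)‖x‖² - √(xᵀCx) with value -λ₁/(2α). -/
theorem stmt_12 (n : ℕ) (C : Matrix (Fin n) (Fin n) ℝ) (lam1 α : ℝ)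
    (u1 : Fin n → ℝ)
    (hsymm : C.IsSymm)
    (hpsd : ∀ v : Fin n → ℝ, 0 ≤ v ⬝ᵥ C *ᵥ v)
    (htop : ∀ v : Fin n → ℝ, v ⬝ᵥ C *ᵥ v ≤ lam1 * ∑ i : Fin n, (v i) ^ 2)
    (heig : C *ᵥ u1 = lam1 • u1)
    (hunit : (∑ i : Fin n, (u1 i) ^ 2) = 1)
    (hlam : 0 < lam1) (hα : 0 < α) :
    letI F : (Fin n → ℝ) → ℝ := fun x =>
      α / 2 * (∑ i : Fin n, (x i) ^ 2) - Real.sqrt (x ⬝ᵥ C *ᵥ x)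
    (∀ x : Fin n → ℝ, F ((Real.sqrt lam1 / α) • u1) ≤ F x) ∧
    (∀ x : Fin n → ℝ, F (-((Real.sqrt lam1 / α) • u1)) ≤ F x) ∧
    F ((Real.sqrt lam1 / α) • u1) = -(lam1 / (2 * α)) ∧
    F (-((Real.sqrt lam1 / α) • u1)) = -(lam1 / (2 * α)) := by
  set F : (Fin n → ℝ) → ℝ := fun x =>
      α / 2 * (∑ i : Fin n, (x i) ^ 2) - Real.sqrt (x ⬝ᵥ C *ᵥ x) with hFdef
  have hsl : (0:ℝ) < Real.sqrt lam1 := Real.sqrt_pos.mpr hlam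
  have hsl2 : (Real.sqrt lam1) ^ 2 = lam1 := Real.sq_sqrt hlam.le
  have hquad : u1 ⬝ᵥ C *ᵥ u1 = lam1 := by
    rw [heig, dotProduct_smul]
    have h : u1 ⬝ᵥ u1 = ∑ i : Fin n, (u1 i) ^ 2 := by
      simp [dotProduct, pow_two]
    rw [smul_eq_mul, h, hunit, mul_one]
  -- value at c • u1 for any c
  have hval : ∀ c : ℝ, F (c • u1) = α / 2 * c ^ 2 - Real.sqrt (c ^ 2 * lam1) := by
    intro c
    have h1 : (∑ i : Fin n, ((c • u1) i) ^ 2) = c ^ 2 := by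
      simp only [Pi.smul_apply, smul_eq_mul, mul_pow, ← Finset.mul_sum, hunit, mul_one]
    have h2 : (c • u1) ⬝ᵥ C *ᵥ (c • u1) = c ^ 2 * lam1 := by
      rw [mulVec_smul, smul_dotProduct, dotProduct_smul, hquad]
      simp only [smul_eq_mul]; ring
    rw [hFdef]; simp only [h1, h2]
  have hvalc : ∀ c : ℝ, c ^ 2 = lam1 / α ^ 2 → F (c • u1) = -(lam1 / (2 * α)) := by
    intro c hc
    rw [hval c, hc]
    have h3 : lam1 / α ^ 2 * lam1 = (lam1 / α) ^ 2 := by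
      field_simp
    rw [h3, Real.sqrt_sq (by positivity)]
    field_simp; ring
  have hc2 : (Real.sqrt lam1 / α) ^ 2 = lam1 / α ^ 2 := by
    rw [div_pow, hsl2]
  have hpos : F ((Real.sqrt lam1 / α) • u1) = -(lam1 / (2 * α)) := hvalc _ hc2
  have hneg : F (-((Real.sqrt lam1 / α) • u1)) = -(lam1 / (2 * α)) := by
    rw [← neg_smul]
    exact hvalc _ (by rw [neg_pow, hc2]; ring)
  -- lower bound
  have hlb : ∀ x : Fin n → ℝ, -(lam1 / (2 * α)) ≤ F x := by
    intro x
    set s := ∑ i : Fin n, (x i) ^ 2 with hs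
    have hs0 : 0 ≤ s := Finset.sum_nonneg fun i _ => sq_nonneg _
    have hsq : Real.sqrt (x ⬝ᵥ C *ᵥ x) ≤ Real.sqrt lam1 * Real.sqrt s := by
      rw [← Real.sqrt_mul hlam.le]
      exact Real.sqrt_le_sqrt (htop x)
    have hts : (Real.sqrt s) ^ 2 = s := Real.sq_sqrt hs0
    have hF : F x = α / 2 * s - Real.sqrt (x ⬝ᵥ C *ᵥ x) := rfl
    rw [hF]
    have key : -(lam1 / (2 * α)) ≤ α / 2 * s - Real.sqrt lam1 * Real.sqrt s := by
      have hd : lam1 / (2 * α) * (2 * α) = lam1 := by field_simp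
      nlinarith [sq_nonneg (α * Real.sqrt s - Real.sqrt lam1), hts, hsl2, hd, hα]
    linarith
  exact ⟨fun x => hpos ▸ hlb x, fun x => hneg ▸ hlb x, hpos, hneg⟩
end
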